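/- Power-sum inequality (algebraic core of the higher-power shuffling lemma): Let a, b, x, y be real numbers with a ≥ x, a ≥ y, x ≥ b, y ≥ b, b ≥ 0, and a + b ≥ x + y. Then for every natural number p ≥ 1, a^p + b^p ≥ x^p + y^p. -/
import Mathlib

/-- **Power-sum inequality** (algebraic core of the higher-power shuffling lemma).
If `a ≥ x, y ≥ b ≥ 0` and `a + b ≥ x + y`, then `a^p + b^p ≥ x^p + y^p` for every
natural number `p ≥ 1`. -/
theorem power_sum_inequality (a b x y : ℝ)
    (hax : x ≤ a) (hay : y ≤ a) (hxb : b ≤ x) (hyb : b ≤ y)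
    (hb : 0 ≤ b) (hsum : x + y ≤ a + b) :
    ∀ p : ℕ, 1 ≤ p → x ^ p + y ^ p ≤ a ^ p + b ^ p := by
  intro p hp
  have hx0 : 0 ≤ x := hb.trans hxb
  have hy0 : 0 ≤ y := hb.trans hyb
  have key : x ^ p - b ^ p ≤ a ^ p - y ^ p := by
    rw [← geom_sum₂_mul, ← geom_sum₂_mul]
    apply mul_le_mul
    · apply Finset.sum_le_sum
      intro i _
      exact mul_le_mul (pow_le_pow_left₀ hx0 hax _) (pow_le_pow_left₀ hb hyb _)
        (pow_nonneg hb _) (pow_nonneg (hx0.trans hax) _)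
    · linarith
    · linarith
    · apply Finset.sum_nonneg
      intro i _
      exact mul_nonneg (pow_nonneg (hx0.trans hax) _) (pow_nonneg hy0 _)
  linarith
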